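/- arXiv:2301.07574 — 2 statements merged into one kernel-verified Lean document; each statement's English description precedes it below -/
import Mathlib

section
/- Let 0 < θ₂ < θ₁ < θ ≤ 1, let T > 0, and let w ∈ C([0,T]) be a positive function. Fix T₁ with 0 < T₁ < min{T, (θ₁ Γ(1+θ₁−θ₂)/θ₂)^{1/(θ₁−θ₂)}}. Then θ₁ I_t^1 w(t) − θ₂ I_t^{1+θ₁−θ₂} w(t) ≥ 0 for every t ∈ [0,T₁]. -/
open MeasureTheory

/-- `ω_θ(t) = t^{θ-1}/Γ(θ)`. -/
noncomputable def omegaK (θ t : ℝ) : ℝ := t ^ (θ - 1) / Real.Gamma θ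

/-- time convolution `(f * g)(t) = ∫_0^t f(t-s) g(s) ds`. -/
noncomputable def tconv (f g : ℝ → ℝ) (t : ℝ) : ℝ := ∫ s in (0:ℝ)..t, f (t - s) * g s

/-- Riemann–Liouville fractional integral `I_t^σ w`, with `I_t^0` the identity. -/
noncomputable def RLI (σ : ℝ) (w : ℝ → ℝ) (t : ℝ) : ℝ :=
  if σ = 0 then w t else ∫ s in (0:ℝ)..t, omegaK σ (t - s) * w s

/-- Riemann–Liouville fractional derivative `∂_t^θ w` of order `θ ∈ (0,1)`. -/
noncomputable def RLD (θ : ℝ) (w : ℝ → ℝ) (t : ℝ) : ℝ :=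
  deriv (fun τ => ∫ s in (0:ℝ)..τ, omegaK (1 - θ) (τ - s) * w s) t

/-- Caputo fractional derivative of order `θ ∈ (0,1]`. -/
noncomputable def caputo (θ : ℝ) (w : ℝ → ℝ) (t : ℝ) : ℝ :=
  if θ = 1 then deriv w t
  else (Real.Gamma (1 - θ))⁻¹ *
    deriv (fun τ => ∫ s in (0:ℝ)..τ, (τ - s) ^ (-θ) * (w s - w 0)) t

/-- membership in the Hölder space `C^β([0,T])`. -/
def HolderOnI (β T : ℝ) (w : ℝ → ℝ) : Prop :=
  ContinuousOn w (Set.Icc 0 T) ∧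
    ∃ C : ℝ, ∀ t₁ ∈ Set.Icc (0:ℝ) T, ∀ t₂ ∈ Set.Icc (0:ℝ) T,
      |w t₁ - w t₂| ≤ C * |t₁ - t₂| ^ β

/-- the kernel `N_θ(t) = ω_{1-θ₁}(t) - ω_{1-θ₂}(t)`. -/
noncomputable def Nker (θ₁ θ₂ t : ℝ) : ℝ := omegaK (1 - θ₁) t - omegaK (1 - θ₂) t

/-- Corollary 5.1, first inequality: positivity of `θ₁ I_t^1 w - θ₂ I_t^{1+θ₁-θ₂} w`
on `[0,T₁]`. -/
theorem stmt6 (θ θ₁ θ₂ T T₁ : ℝ)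
    (hθ₂ : 0 < θ₂) (hθ₂₁ : θ₂ < θ₁) (hθ₁θ : θ₁ < θ) (hθ : θ ≤ 1) (hT : 0 < T)
    (w : ℝ → ℝ) (hwc : ContinuousOn w (Set.Icc 0 T))
    (hwpos : ∀ t ∈ Set.Icc (0:ℝ) T, 0 < w t)
    (hT₁ : 0 < T₁)
    (hT₁lt : T₁ < min T ((θ₁ * Real.Gamma (1 + θ₁ - θ₂) / θ₂) ^ (1 / (θ₁ - θ₂)))) :
    ∀ t ∈ Set.Icc (0:ℝ) T₁, 0 ≤ θ₁ * RLI 1 w t - θ₂ * RLI (1 + θ₁ - θ₂) w t := by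
  intro t ht
  obtain ⟨ht0, htT₁⟩ := ht
  have hd : (0:ℝ) < θ₁ - θ₂ := sub_pos.mpr hθ₂₁
  have hθ₁ : 0 < θ₁ := hθ₂.trans hθ₂₁
  have hΓ : 0 < Real.Gamma (1 + θ₁ - θ₂) := Real.Gamma_pos_of_pos (by linarith)
  have hB : 0 < θ₁ * Real.Gamma (1 + θ₁ - θ₂) / θ₂ := by positivity
  have hT₁T : T₁ < T := lt_of_lt_of_le hT₁lt (min_le_left _ _)
  have htT : t ≤ T := le_of_lt (lt_of_le_of_lt htT₁ hT₁T)
  have hIccsub : Set.Icc (0:ℝ) t ⊆ Set.Icc 0 T := Set.Icc_subset_Icc le_rfl htT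
  -- key pointwise kernel bound
  have key : ∀ τ : ℝ, 0 ≤ τ → τ ≤ T₁ →
      θ₂ * τ ^ (θ₁ - θ₂) ≤ θ₁ * Real.Gamma (1 + θ₁ - θ₂) := by
    intro τ hτ0 hτT
    have hle : τ ≤ (θ₁ * Real.Gamma (1 + θ₁ - θ₂) / θ₂) ^ (1 / (θ₁ - θ₂)) :=
      le_of_lt (lt_of_le_of_lt hτT (lt_of_lt_of_le hT₁lt (min_le_right _ _)))
    have h1 : τ ^ (θ₁ - θ₂) ≤
        ((θ₁ * Real.Gamma (1 + θ₁ - θ₂) / θ₂) ^ (1 / (θ₁ - θ₂))) ^ (θ₁ - θ₂) :=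
      Real.rpow_le_rpow hτ0 hle hd.le
    rw [← Real.rpow_mul hB.le, one_div_mul_cancel hd.ne', Real.rpow_one] at h1
    calc θ₂ * τ ^ (θ₁ - θ₂) ≤ θ₂ * (θ₁ * Real.Gamma (1 + θ₁ - θ₂) / θ₂) :=
          mul_le_mul_of_nonneg_left h1 hθ₂.le
      _ = θ₁ * Real.Gamma (1 + θ₁ - θ₂) := by field_simp
  -- integrability
  have hwInt : IntervalIntegrable w volume 0 t :=
    (hwc.mono hIccsub).intervalIntegrable_of_Icc ht0
  have hgc : ContinuousOn (fun s => omegaK (1 + θ₁ - θ₂) (t - s) * w s) (Set.Icc 0 t) := by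
    apply ContinuousOn.mul _ (hwc.mono hIccsub)
    unfold omegaK
    apply ContinuousOn.div_const
    have : Continuous fun s : ℝ => (t - s) ^ (1 + θ₁ - θ₂ - 1) := by
      apply Continuous.rpow_const (continuous_const.sub continuous_id)
      intro x; right; linarith
    exact this.continuousOn
  have hgInt : IntervalIntegrable (fun s => omegaK (1 + θ₁ - θ₂) (t - s) * w s) volume 0 t :=
    hgc.intervalIntegrable_of_Icc ht0
  -- rewrite the two RLIs
  have hne : (1 + θ₁ - θ₂ : ℝ) ≠ 0 := by linarith
  have h1 : RLI 1 w t = ∫ s in (0:ℝ)..t, w s := by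
    rw [RLI, if_neg one_ne_zero]
    apply intervalIntegral.integral_congr
    intro s _
    simp [omegaK, Real.Gamma_one]
  have h2 : RLI (1 + θ₁ - θ₂) w t = ∫ s in (0:ℝ)..t,
      omegaK (1 + θ₁ - θ₂) (t - s) * w s := by
    rw [RLI, if_neg hne]
  rw [h1, h2, ← intervalIntegral.integral_const_mul, ← intervalIntegral.integral_const_mul,
    ← intervalIntegral.integral_sub (hwInt.const_mul θ₁) (hgInt.const_mul θ₂)]
  apply intervalIntegral.integral_nonneg ht0
  intro s hs
  have hs0 : 0 ≤ s := hs.1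
  have hst : s ≤ t := hs.2
  have hws : 0 < w s := hwpos s (hIccsub hs)
  have hts0 : 0 ≤ t - s := by linarith
  have htsT₁ : t - s ≤ T₁ := by linarith
  have hk := key (t - s) hts0 htsT₁
  have hker : θ₂ * omegaK (1 + θ₁ - θ₂) (t - s) ≤ θ₁ := by
    unfold omegaK
    rw [mul_div_assoc', div_le_iff₀ hΓ]
    have : 1 + θ₁ - θ₂ - 1 = θ₁ - θ₂ := by ring
    rw [this]; exact hk
  have : θ₂ * (omegaK (1 + θ₁ - θ₂) (t - s) * w s) ≤ θ₁ * w s := by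
    rw [← mul_assoc]
    exact mul_le_mul_of_nonneg_right hker hws.le
  linarith
end

section
/- Let 0 < θ₂ < θ₁ < θ ≤ 1, let T > 0, and let w ∈ C([0,T]) be a positive function. Fix T₂ with 0 < T₂ < min{T, (θ₁ Γ(1+θ−θ₂)/(θ₂ Γ(1+θ−θ₁)))^{1/(θ₁−θ₂)}}. Then θ₁ I_t^{1+θ−θ₁} w(t) − θ₂ I_t^{1+θ−θ₂} w(t) ≥ 0 for every t ∈ [0,T₂]. -/
open MeasureTheory

/-- Corollary 5.1, second inequality: positivity of
`θ₁ I_t^{1+θ-θ₁} w - θ₂ I_t^{1+θ-θ₂} w` on `[0,T₂]`. -/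
theorem stmt7 (θ θ₁ θ₂ T T₂ : ℝ)
    (hθ₂ : 0 < θ₂) (hθ₂₁ : θ₂ < θ₁) (hθ₁θ : θ₁ < θ) (hθ : θ ≤ 1) (hT : 0 < T)
    (w : ℝ → ℝ) (hwc : ContinuousOn w (Set.Icc 0 T))
    (hwpos : ∀ t ∈ Set.Icc (0:ℝ) T, 0 < w t)
    (hT₂ : 0 < T₂)
    (hT₂lt : T₂ < min T
      ((θ₁ * Real.Gamma (1 + θ - θ₂) / (θ₂ * Real.Gamma (1 + θ - θ₁))) ^ (1 / (θ₁ - θ₂)))) :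
    ∀ t ∈ Set.Icc (0:ℝ) T₂,
      0 ≤ θ₁ * RLI (1 + θ - θ₁) w t - θ₂ * RLI (1 + θ - θ₂) w t := by
  intro t ht
  have hθ₁pos : 0 < θ₁ := hθ₂.trans hθ₂₁
  have hΓ₁ : 0 < Real.Gamma (1 + θ - θ₁) := Real.Gamma_pos_of_pos (by linarith)
  have hΓ₂ : 0 < Real.Gamma (1 + θ - θ₂) := Real.Gamma_pos_of_pos (by linarith)
  have hσ₁ : (1 : ℝ) + θ - θ₁ ≠ 0 := by intro h; nlinarith
  have hσ₂ : (1 : ℝ) + θ - θ₂ ≠ 0 := by intro h; nlinarith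
  have htT : t ≤ T := le_trans ht.2 (le_of_lt (lt_of_lt_of_le hT₂lt (min_le_left _ _)))
  have hsub : Set.Icc (0:ℝ) t ⊆ Set.Icc 0 T := Set.Icc_subset_Icc le_rfl htT
  -- key kernel inequality
  have key : ∀ u : ℝ, 0 ≤ u → u ≤ T₂ →
      θ₂ * omegaK (1 + θ - θ₂) u ≤ θ₁ * omegaK (1 + θ - θ₁) u := by
    intro u hu0 huT
    unfold omegaK
    have e₁ : (1:ℝ) + θ - θ₁ - 1 = θ - θ₁ := by ring
    have e₂ : (1:ℝ) + θ - θ₂ - 1 = θ - θ₂ := by ring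
    rw [e₁, e₂]
    rcases eq_or_lt_of_le hu0 with h0 | hu
    · rw [← h0, Real.zero_rpow (by linarith), Real.zero_rpow (by linarith)]
      simp
    · set R : ℝ := θ₁ * Real.Gamma (1 + θ - θ₂) / (θ₂ * Real.Gamma (1 + θ - θ₁)) with hR
      have hRpos : 0 < R := by positivity
      have hd : (0:ℝ) < θ₁ - θ₂ := by linarith
      have huR : u ^ (θ₁ - θ₂) ≤ R := by
        have h1 : u ≤ R ^ (θ₁ - θ₂)⁻¹ := by
          have := lt_of_lt_of_le hT₂lt (min_le_right _ _)
          rw [one_div] at this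
          linarith
        calc u ^ (θ₁ - θ₂) ≤ (R ^ (θ₁ - θ₂)⁻¹) ^ (θ₁ - θ₂) :=
              Real.rpow_le_rpow hu0 h1 hd.le
          _ = R := Real.rpow_inv_rpow hRpos.le hd.ne'
      have hsplit : u ^ (θ - θ₂) = u ^ (θ - θ₁) * u ^ (θ₁ - θ₂) := by
        rw [← Real.rpow_add hu]; ring_nf
      rw [hsplit]
      have ha : (0:ℝ) ≤ u ^ (θ - θ₁) := Real.rpow_nonneg hu0 _
      have hb : u ^ (θ₁ - θ₂) * (θ₂ * Real.Gamma (1 + θ - θ₁)) ≤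
          θ₁ * Real.Gamma (1 + θ - θ₂) := by
        rw [hR, le_div_iff₀ (by positivity)] at huR
        linarith
      have := mul_le_mul_of_nonneg_left hb ha
      rw [mul_div_assoc', mul_div_assoc', div_le_div_iff₀ hΓ₂ hΓ₁]
      nlinarith [this]
  -- integrability
  have hcont : ∀ c : ℝ, 0 < c → ∀ γ : ℝ,
      ContinuousOn (fun s => (t - s) ^ c / γ * w s) (Set.Icc 0 t) := by
    intro c hc γ
    exact ((((Real.continuous_rpow_const hc.le).comp
      (continuous_const.sub continuous_id)).div_const γ).continuousOn).mul (hwc.mono hsub)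
  have hint : ∀ σ : ℝ, 1 < σ →
      IntervalIntegrable (fun s => omegaK σ (t - s) * w s) volume 0 t := by
    intro σ hσ
    have : ContinuousOn (fun s => omegaK σ (t - s) * w s) (Set.Icc 0 t) := by
      have := hcont (σ - 1) (by linarith) (Real.Gamma σ)
      simpa [omegaK, div_eq_mul_inv] using this
    exact this.intervalIntegrable_of_Icc ht.1
  have h₁ : (1:ℝ) < 1 + θ - θ₁ := by linarith
  have h₂ : (1:ℝ) < 1 + θ - θ₂ := by linarith
  rw [RLI, RLI, if_neg hσ₁, if_neg hσ₂, ← intervalIntegral.integral_const_mul,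
    ← intervalIntegral.integral_const_mul,
    ← intervalIntegral.integral_sub ((hint _ h₁).const_mul θ₁) ((hint _ h₂).const_mul θ₂)]
  apply intervalIntegral.integral_nonneg ht.1
  intro s hs
  have hws : 0 ≤ w s := (hwpos s (hsub hs)).le
  have hk := key (t - s) (by linarith [hs.2]) (by linarith [hs.1, ht.2])
  nlinarith [mul_le_mul_of_nonneg_right hk hws]
end
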